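/- If A and B are groups each having no element of order p (for a fixed prime p), then the free product A * B has no element of order p. -/

import Mathlib

open Monoid Coprod

namespace Stmt11Aux

open List

open Monoid.CoprodI

variable {ι : Type*} {G : ι → Type*} [∀ i, Group (G i)] [DecidableEq ι]
  [∀ i, DecidableEq (G i)]

theorem prod_injective :
    Function.Injective (Word.prod : Word G → CoprodI G) := by
  have : (Word.prod : Word G → CoprodI G) = Word.equiv.symm := rfl
  rw [this]
  exact Word.equiv.symm.injective

theorem infinite_order_of_cyc (w : Word G) (hne : w.toList ≠ [])
    (hcyc : ∀ x ∈ w.toList.getLast?, ∀ y ∈ w.toList.head?, x.1 ≠ y.1) :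
    ¬ IsOfFinOrder w.prod := by
  intro hfin
  obtain ⟨n, hn, hpow⟩ := isOfFinOrder_iff_pow_eq_one.mp hfin
  set l := w.toList with hl
  have hmem : ([] : List (Σ i, G i)) ∉ List.replicate n l := by
    intro h
    exact hne ((List.eq_of_mem_replicate h).symm)
  have hchain : ((List.replicate n l).flatten).IsChain
      (fun a b : Σ i, G i => a.1 ≠ b.1) := by
    rw [List.isChain_flatten hmem]
    refine ⟨fun l' hl' => ?_, ?_⟩
    · rw [List.eq_of_mem_replicate hl']; exact w.chain_ne
    · exact List.isChain_replicate_of_rel n hcyc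
  have hone : ∀ a ∈ (List.replicate n l).flatten, a.2 ≠ (1 : G a.1) := by
    intro a ha
    rw [List.mem_flatten] at ha
    obtain ⟨l', hl', ha⟩ := ha
    rw [List.eq_of_mem_replicate hl'] at ha
    exact w.ne_one a ha
  set W : Word G := ⟨(List.replicate n l).flatten, hone, hchain⟩ with hW
  have hWprod : W.prod = w.prod ^ n := by
    show ((List.replicate n l).flatten.map fun a => of a.2).prod = _
    rw [List.map_flatten, List.prod_flatten, List.map_map, List.map_replicate,
      List.prod_replicate]
    rfl
  have hWempty : W = Word.empty := by
    apply prod_injective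
    rw [hWprod, hpow, Word.prod_empty]
  have : (List.replicate n l).flatten = [] := congrArg Word.toList hWempty
  have hlen := congrArg List.length this
  rw [List.length_flatten, List.map_replicate, List.sum_replicate, smul_eq_mul] at hlen
  rcases Nat.mul_eq_zero.mp hlen with h | h
  · exact hn.ne' h
  · exact hne (List.length_eq_zero_iff.mp h)

theorem conj_or_infinite (g : CoprodI G) :
    g = 1 ∨ (∃ (i : ι) (x : G i) (h : CoprodI G), g = h * of x * h⁻¹) ∨ ¬ IsOfFinOrder g := by
  suffices H : ∀ (n : ℕ) (g : CoprodI G), (Word.equiv g).toList.length ≤ n →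
      g = 1 ∨ (∃ (i : ι) (x : G i) (h : CoprodI G), g = h * of x * h⁻¹) ∨ ¬ IsOfFinOrder g from
    H _ g le_rfl
  intro n
  induction n with
  | zero =>
    intro g hg
    left
    have hprod : (Word.equiv g).prod = g := Word.equiv.symm_apply_apply g
    have : (Word.equiv g).toList = [] := List.length_eq_zero_iff.mp (Nat.le_zero.mp hg)
    rw [← hprod]
    show ((Word.equiv g).toList.map fun a => of a.2).prod = 1
    rw [this]; rfl
  | succ n ih =>
    intro g hg
    have hprod : (Word.equiv g).prod = g := Word.equiv.symm_apply_apply g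
    have hchain : (Word.equiv g).toList.Chain' (fun a b : Σ i, G i => a.1 ≠ b.1) :=
      (Word.equiv g).chain_ne
    have hone : ∀ a ∈ (Word.equiv g).toList, a.2 ≠ (1 : G a.1) := (Word.equiv g).ne_one
    rcases hl : (Word.equiv g).toList with _ | ⟨⟨i, x⟩, t⟩
    · left
      rw [← hprod]
      show ((Word.equiv g).toList.map fun a => of a.2).prod = 1
      rw [hl]; rfl
    · rcases eq_or_ne t [] with rfl | ht
      · right; left
        refine ⟨i, x, 1, ?_⟩
        rw [← hprod]
        show ((Word.equiv g).toList.map fun a => of a.2).prod = _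
        rw [hl]; simp
      · obtain ⟨c, b, rfl⟩ : ∃ c b, t = c ++ [b] :=
          ⟨t.dropLast, t.getLast ht, (List.dropLast_append_getLast ht).symm⟩
        obtain ⟨j, y⟩ := b
        rw [hl] at hchain hone
        have hgeq : g = of x * ((c.map fun a : Σ i, G i => of a.2).prod * of y) := by
          rw [← hprod]
          show ((Word.equiv g).toList.map fun a => of a.2).prod = _
          rw [hl]; simp
        by_cases hij : j = i
        · subst hij
          set P := (c.map fun a : Σ i, G i => of a.2).prod with hP
          set g' := (of x)⁻¹ * g * of x with hg'
          have hgg' : g = of x * g' * (of x)⁻¹ := by rw [hg']; group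
          have hkey : g' = P * of (y * x) := by
            rw [hg', hgeq, map_mul]; group
          -- facts about c
          have hc_chain : c.Chain' (fun a b : Σ i, G i => a.1 ≠ b.1) :=
            ((List.isChain_append.mp hchain.tail).1)
          have hc_one : ∀ a ∈ c, a.2 ≠ (1 : G a.1) := fun a ha =>
            hone a (List.mem_cons_of_mem _ (List.mem_append_left _ ha))
          have hc_last : ∀ a ∈ c.getLast?, a.1 ≠ j := by
            intro a ha
            have := (List.isChain_append.mp hchain.tail).2.2 a ha ⟨j, y⟩ rfl
            exact this
          have hlen : c.length + 2 ≤ n + 1 := by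
            have := hg
            rw [hl] at this
            simpa [List.length_append] using this
          by_cases hyx : y * x = 1
          · -- g' = P
            set w' : Word G := ⟨c, hc_one, hc_chain⟩ with hw'
            have hw'prod : w'.prod = g' := by
              rw [hkey, hyx, map_one, mul_one]; rfl
            have hEq : Word.equiv g' = w' := by
              rw [← hw'prod]
              exact Word.equiv.apply_symm_apply w'
            have hlen' : (Word.equiv g').toList.length ≤ n := by
              rw [hEq]; show c.length ≤ n; omega
            rcases ih g' hlen' with h1 | ⟨k, z, h, h2⟩ | h3
            · left; rw [hgg', h1]; group
            · right; left
              exact ⟨k, z, of x * h, by rw [hgg', h2]; group⟩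
            · right; right
              intro hfin
              apply h3
              have hsc : SemiconjBy ((of x)⁻¹ : CoprodI G) g g' := by
                rw [hg']; unfold SemiconjBy; group
              rw [← orderOf_pos_iff] at hfin ⊢
              rwa [← hsc.orderOf_eq]
          · have hone' : ∀ a ∈ c ++ [(⟨j, y * x⟩ : Σ i, G i)], a.2 ≠ (1 : G a.1) := by
              intro a ha
              rcases List.mem_append.mp ha with h | h
              · exact hc_one a h
              · rw [List.mem_singleton] at h; subst h; exact hyx
            have hchain' : (c ++ [(⟨j, y * x⟩ : Σ i, G i)]).IsChain
                (fun a b : Σ i, G i => a.1 ≠ b.1) := by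
              rw [List.isChain_append]
              refine ⟨hc_chain, List.isChain_singleton _, ?_⟩
              intro a ha b hb
              rw [List.head?_cons, Option.mem_some_iff] at hb
              subst hb
              exact hc_last a ha
            set w' : Word G := ⟨c ++ [⟨j, y * x⟩], hone', hchain'⟩ with hw'
            have hw'prod : w'.prod = g' := by
              rw [hkey]
              show ((c ++ [(⟨j, y * x⟩ : Σ i, G i)]).map fun a : Σ i, G i => of a.2).prod = _
              simp [hP]
            have hEq : Word.equiv g' = w' := by
              rw [← hw'prod]
              exact Word.equiv.apply_symm_apply w'
            have hlen' : (Word.equiv g').toList.length ≤ n := by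
              rw [hEq]
              show (c ++ [(⟨j, y * x⟩ : Σ i, G i)]).length ≤ n
              simp only [List.length_append, List.length_singleton]
              omega
            rcases ih g' hlen' with h1 | ⟨k, z, h, h2⟩ | h3
            · left; rw [hgg', h1]; group
            · right; left
              exact ⟨k, z, of x * h, by rw [hgg', h2]; group⟩
            · right; right
              intro hfin
              apply h3
              have hsc : SemiconjBy ((of x)⁻¹ : CoprodI G) g g' := by
                rw [hg']; unfold SemiconjBy; group
              rw [← orderOf_pos_iff] at hfin ⊢
              rwa [← hsc.orderOf_eq]
        · right; right
          rw [← hprod]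
          apply infinite_order_of_cyc
          · rw [hl]; exact List.cons_ne_nil _ _
          · rw [hl]
            intro a ha b hb
            rw [show (⟨i, x⟩ :: (c ++ [⟨j, y⟩]) : List (Σ i, G i))
                = (⟨i, x⟩ :: c) ++ [⟨j, y⟩] by simp] at ha
            rw [List.getLast?_concat, Option.mem_some_iff] at ha
            rw [List.head?_cons, Option.mem_some_iff] at hb
            subst ha; subst hb
            exact hij

theorem coprodI_no_order_p (p : ℕ) (hp : p.Prime)
    (h : ∀ (i : ι) (x : G i), orderOf x ≠ p) (g : CoprodI G) : orderOf g ≠ p := by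
  intro hg
  rcases conj_or_infinite g with rfl | ⟨i, x, h', rfl⟩ | hfin
  · rw [orderOf_one] at hg
    exact hp.one_lt.ne' hg.symm
  · have hsc : SemiconjBy h' (of x) (h' * of x * h'⁻¹) := by
      unfold SemiconjBy; group
    rw [← hsc.orderOf_eq, orderOf_injective of (of_injective i) x] at hg
    exact h i x hg
  · rw [orderOf_eq_zero hfin] at hg
    exact hp.ne_zero hg.symm

end Stmt11Aux


/-- If `A` and `B` have no elements of order `p` (a prime), then neither does the free
product `A ∗ B`. -/
theorem stmt_11 {A B : Type*} [Group A] [Group B] (p : ℕ) (hp : p.Prime)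
    (hA : ∀ a : A, orderOf a ≠ p) (hB : ∀ b : B, orderOf b ≠ p) :
    ∀ g : A ∗ B, orderOf g ≠ p := by
  classical
  intro g
  let A' := ULift.{max u_1 u_2} A
  let B' := ULift.{max u_1 u_2} B
  let G : Bool → Type (max u_1 u_2) := fun b => cond b A' B'
  letI instG : ∀ b, Group (G b) := fun b => match b with
    | true => (inferInstance : Group A')
    | false => (inferInstance : Group B')
  let eA : A ≃* A' := MulEquiv.ulift.symm
  let eB : B ≃* B' := MulEquiv.ulift.symm
  let φ : A ∗ B →* Monoid.CoprodI G :=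
    Coprod.lift ((Monoid.CoprodI.of (i := true)).comp eA.toMonoidHom)
      ((Monoid.CoprodI.of (i := false)).comp eB.toMonoidHom)
  let ψ : Monoid.CoprodI G →* A ∗ B :=
    Monoid.CoprodI.lift (fun b => match b with
      | true => ((Coprod.inl : A →* A ∗ B).comp eA.symm.toMonoidHom)
      | false => ((Coprod.inr : B →* A ∗ B).comp eB.symm.toMonoidHom))
  have hcomp : ψ.comp φ = MonoidHom.id _ := by
    apply Coprod.hom_ext
    · ext a
      simp only [φ, ψ, MonoidHom.comp_apply, MonoidHom.id_apply, Coprod.lift_apply_inl,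
        Monoid.CoprodI.lift_of, MulEquiv.coe_toMonoidHom]
      exact congrArg Coprod.inl (eA.symm_apply_apply a)
    · ext b
      simp only [φ, ψ, MonoidHom.comp_apply, MonoidHom.id_apply, Coprod.lift_apply_inr,
        Monoid.CoprodI.lift_of, MulEquiv.coe_toMonoidHom]
      exact congrArg Coprod.inr (eB.symm_apply_apply b)
  have hinj : Function.Injective φ := by
    intro a b hab
    have := congrArg ψ hab
    calc a = (ψ.comp φ) a := by rw [hcomp]; rfl
    _ = (ψ.comp φ) b := this
    _ = b := by rw [hcomp]; rfl
  rw [← orderOf_injective φ hinj g]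
  apply Stmt11Aux.coprodI_no_order_p p hp
  intro i x
  match i with
  | true =>
    rw [← orderOf_injective eA.symm.toMonoidHom eA.symm.injective x]
    exact hA _
  | false =>
    rw [← orderOf_injective eB.symm.toMonoidHom eB.symm.injective x]
    exact hB _
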